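/- arXiv:2102.02469 — 3 statements merged into one kernel-verified Lean document; each statement's English description precedes it below -/
import Mathlib

section
/- For n ∈ ℤ[ω] with n ≡ 1 (mod 3) and coprime to 3, the cubic residue symbol of ω at n satisfies (ω/n)₃ = ω^{(N(n)−1)/3}, where N denotes the norm from ℚ(ω) to ℚ. -/
open Complex

/-- `ω = e^{2πi/3}`, a primitive cube root of unity. -/
noncomputable def ω : ℂ := Complex.exp (2 * Real.pi * Complex.I / 3)

/-- The ring of Eisenstein integers `ℤ[ω]`, as a subalgebra of `ℂ`. -/
noncomputable def Eis : Subalgebra ℤ ℂ := Algebra.adjoin ℤ {ω}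

/-- `ω` as an element of `ℤ[ω]`. -/
noncomputable def ωE : Eis := ⟨ω, Algebra.subset_adjoin (Set.mem_singleton ω)⟩

/-- `IsCubicSymbol χ` says that `χ n a` is the cubic residue symbol `(a/n)₃` on `ℤ[ω]`:
it is multiplicative in the lower argument, and at a prime `π ≡ ±1 (mod 3)` and `a`
coprime to `π` it is the unique cube root of unity congruent to `a^((N(π)-1)/3)` mod `π`
(and it vanishes when `a` is not coprime to `π`). -/
structure IsCubicSymbol (χ : Eis → Eis → ℂ) : Prop where
  map_one_left : ∀ a, χ 1 a = 1
  mul_left : ∀ m n a, χ (m * n) a = χ m a * χ n a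
  cube : ∀ π a, Prime π → ((3 : Eis) ∣ π - 1 ∨ (3 : Eis) ∣ π + 1) → IsCoprime a π →
      (χ π a) ^ 3 = 1
  spec : ∀ π a (e : ℕ), Prime π → ((3 : Eis) ∣ π - 1 ∨ (3 : Eis) ∣ π + 1) → IsCoprime a π →
      Complex.normSq (π : ℂ) = 3 * e + 1 →
      ∃ u : Eis, (u : ℂ) = χ π a ∧ π ∣ a ^ e - u
  eq_zero : ∀ π a, Prime π → ((3 : Eis) ∣ π - 1 ∨ (3 : Eis) ∣ π + 1) → ¬ IsCoprime a π →
      χ π a = 0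

lemma omega_eq : ω = Complex.exp ((2 * Real.pi / 3 : ℝ) * Complex.I) := by
  unfold ω; push_cast; ring_nf

lemma omega_re : ω.re = -(1/2) := by
  rw [omega_eq, Complex.exp_ofReal_mul_I_re]
  have : (2 * Real.pi / 3 : ℝ) = Real.pi - Real.pi/3 := by ring
  rw [this, Real.cos_pi_sub, Real.cos_pi_div_three]

lemma omega_im : ω.im = Real.sqrt 3 / 2 := by
  rw [omega_eq, Complex.exp_ofReal_mul_I_im]
  have : (2 * Real.pi / 3 : ℝ) = Real.pi - Real.pi/3 := by ring
  rw [this, Real.sin_pi_sub, Real.sin_pi_div_three]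

lemma omega_cube : ω ^ 3 = 1 := by
  unfold ω
  rw [← Complex.exp_nat_mul]
  have : ((3:ℕ):ℂ) * (2 * Real.pi * Complex.I / 3) = 2 * Real.pi * Complex.I := by
    push_cast; ring
  rw [this, Complex.exp_two_pi_mul_I]

lemma omega_ne_one : ω ≠ 1 := by
  intro h
  have := omega_re
  rw [h] at this
  norm_num at this

lemma omega_sq : ω ^ 2 = -1 - ω := by
  have h : (ω - 1) * (ω^2 + ω + 1) = 0 := by linear_combination omega_cube
  rcases mul_eq_zero.1 h with h1 | h2
  · exact absurd (sub_eq_zero.1 h1) omega_ne_one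
  · linear_combination h2

lemma omega_im_pos : 0 < ω.im := by
  rw [omega_im]; positivity

/-- integer combinations -/
noncomputable def mkE (a b : ℤ) : Eis := (a : Eis) + (b : Eis) * ωE

lemma mkE_coe (a b : ℤ) : ((mkE a b : Eis) : ℂ) = a + b * ω := by
  simp [mkE, ωE]

lemma exists_coords (x : Eis) : ∃ a b : ℤ, (x : ℂ) = a + b * ω := by
  refine Algebra.adjoin_induction (p := fun z _ => ∃ a b : ℤ, z = a + b * ω) ?_ ?_ ?_ ?_ x.2
  · intro z hz
    rw [Set.mem_singleton_iff.1 hz]; exact ⟨0, 1, by push_cast; ring⟩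
  · intro r; exact ⟨r, 0, by push_cast; simp⟩
  · rintro z w _ _ ⟨a, b, hz⟩ ⟨c, d, hw⟩
    exact ⟨a + c, b + d, by push_cast; rw [hz, hw]; ring⟩
  · rintro z w _ _ ⟨a, b, hz⟩ ⟨c, d, hw⟩
    refine ⟨a * c - b * d, a * d + b * c - b * d, ?_⟩
    push_cast
    rw [hz, hw]
    linear_combination (b : ℂ) * d * omega_sq

/-- the real-coefficient norm formula -/
lemma normSq_coords (a b : ℝ) : Complex.normSq ((a : ℂ) + b * ω) = a^2 - a*b + b^2 := by
  have h3 : Real.sqrt 3 ^ 2 = 3 := Real.sq_sqrt (by norm_num)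
  simp [Complex.normSq_apply, Complex.add_re, Complex.add_im, Complex.mul_re, Complex.mul_im,
    Complex.ofReal_re, Complex.ofReal_im, omega_re, omega_im]
  nlinarith [h3]

lemma eis_ext {x y : Eis} (h : (x:ℂ) = (y:ℂ)) : x = y := Subtype.ext h

lemma coe_zero_iff {x : Eis} : (x:ℂ) = 0 ↔ x = 0 :=
  ⟨fun h => eis_ext (by simpa using h), fun h => by simp [h]⟩

lemma normSq_int (x : Eis) : ∃ k : ℤ, Complex.normSq (x:ℂ) = k ∧ 0 ≤ k := by
  obtain ⟨a, b, h⟩ := exists_coords x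
  refine ⟨a^2 - a*b + b^2, ?_, ?_⟩
  · rw [h]; have := normSq_coords (a:ℝ) (b:ℝ); push_cast at this ⊢; linarith
  · nlinarith [sq_nonneg (2*a - b), sq_nonneg b]

lemma normSq_ge_one (x : Eis) (hx : x ≠ 0) : 1 ≤ Complex.normSq (x:ℂ) := by
  obtain ⟨a, b, h⟩ := exists_coords x
  have hab : ¬(a = 0 ∧ b = 0) := by
    rintro ⟨rfl, rfl⟩
    exact hx (coe_zero_iff.1 (by rw [h]; push_cast; ring))
  have h1 : 1 ≤ a^2 - a*b + b^2 := by
    rcases lt_trichotomy ((2*a-b)^2 + 3*b^2) 0 with h'|h'|h'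
    · nlinarith
    · exfalso; apply hab
      have hb2 : b^2 = 0 := by nlinarith [sq_nonneg (2*a-b)]
      have hb : b = 0 := by exact pow_eq_zero_iff (by norm_num) |>.1 hb2
      subst hb
      have ha2 : a^2 = 0 := by nlinarith
      exact ⟨pow_eq_zero_iff (by norm_num) |>.1 ha2, rfl⟩
    · nlinarith
  rw [h]
  have := normSq_coords (a:ℝ) (b:ℝ)
  push_cast at this ⊢
  rw [this]
  exact_mod_cast by exact_mod_cast (by push_cast; exact_mod_cast h1 : (1:ℝ) ≤ (a:ℝ)^2 - a*b + b^2)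

/-- ℕ-valued norm -/
noncomputable def nrm (x : Eis) : ℕ := ⌊Complex.normSq (x:ℂ)⌋₊

lemma nrm_eq (x : Eis) : (nrm x : ℝ) = Complex.normSq (x:ℂ) := by
  obtain ⟨k, hk, hk0⟩ := normSq_int x
  rw [nrm, hk]
  rw [show ((k:ℝ)) = ((k.toNat : ℕ) : ℝ) by exact_mod_cast (Int.toNat_of_nonneg hk0).symm]
  rw [Nat.floor_natCast]

lemma nrm_mul (x y : Eis) : nrm (x * y) = nrm x * nrm y := by
  have : (↑(nrm (x*y)) : ℝ) = ((nrm x * nrm y : ℕ) : ℝ) := by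
    rw [nrm_eq]; push_cast [nrm_eq]
    show Complex.normSq ((x:ℂ) * (y:ℂ)) = _
    rw [map_mul]
  exact_mod_cast this

lemma nrm_pos (x : Eis) (hx : x ≠ 0) : 1 ≤ nrm x := by
  have := normSq_ge_one x hx
  have h := nrm_eq x
  have : (1:ℝ) ≤ (nrm x : ℝ) := by rw [h]; exact this
  exact_mod_cast this

lemma nrm_zero_iff (x : Eis) : nrm x = 0 ↔ x = 0 := by
  constructor
  · intro h
    by_contra hx
    have := nrm_pos x hx; omega
  · rintro rfl; simp [nrm]

/-- coordinates of an arbitrary complex number in basis 1, ω -/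
noncomputable def cB (z : ℂ) : ℝ := z.im / ω.im
noncomputable def cA (z : ℂ) : ℝ := z.re - cB z * ω.re

lemma coord_spec (z : ℂ) : z = (cA z : ℝ) + (cB z : ℝ) * ω := by
  apply Complex.ext
  · simp [cA, cB]
  · simp [cA, cB, div_mul_cancel₀ _ (ne_of_gt omega_im_pos)]

noncomputable def quoE (x y : Eis) : Eis :=
  if y = 0 then 0 else mkE (round (cA ((x:ℂ)/(y:ℂ)))) (round (cB ((x:ℂ)/(y:ℂ))))

noncomputable def remE (x y : Eis) : Eis := x - y * quoE x y

lemma remE_lt (x y : Eis) (hy : y ≠ 0) : nrm (remE x y) < nrm y := by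
  have hyC : (y:ℂ) ≠ 0 := fun h => hy (coe_zero_iff.1 h)
  set z := (x:ℂ)/(y:ℂ) with hz
  set q := mkE (round (cA z)) (round (cB z)) with hq
  have hquo : quoE x y = q := by rw [quoE, if_neg hy]
  have key : Complex.normSq (z - (q:ℂ)) ≤ 3/4 := by
    have hzc := coord_spec z
    have : z - (q:ℂ) = ((cA z - round (cA z) : ℝ) : ℂ) + ((cB z - round (cB z) : ℝ)) * ω := by
      rw [mkE_coe]
      nth_rewrite 1 [hzc]
      push_cast
      ring
    rw [this, normSq_coords]
    have h1 := abs_sub_round (cA z)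
    have h2 := abs_sub_round (cB z)
    set u := cA z - round (cA z)
    set v := cB z - round (cB z)
    rw [abs_le] at h1 h2
    nlinarith
  have hrem : ((remE x y : Eis) : ℂ) = (y:ℂ) * (z - (q:ℂ)) := by
    rw [remE, hquo]
    push_cast
    rw [hz, mul_sub, mul_div_cancel₀ _ hyC]
  have : (nrm (remE x y) : ℝ) < (nrm y : ℝ) := by
    rw [nrm_eq, nrm_eq, hrem, map_mul]
    have hy1 : 1 ≤ Complex.normSq (y:ℂ) := normSq_ge_one y hy
    nlinarith [normSq_nonneg (z - (q:ℂ)), normSq_nonneg (y:ℂ)]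
  exact_mod_cast this

noncomputable instance : EuclideanDomain Eis where
  __ := (inferInstance : CommRing Eis)
  __ := (inferInstance : Nontrivial Eis)
  quotient := quoE
  quotient_zero a := by simp [quoE]
  remainder := remE
  quotient_mul_add_remainder_eq a b := by rw [remE]; ring
  r a b := nrm a < nrm b
  r_wellFounded := InvImage.wf nrm Nat.lt_wfRel.wf
  remainder_lt a b hb := remE_lt a b hb
  mul_left_not_lt a b hb := by
    have h := nrm_mul a b
    have hb1 := nrm_pos b hb
    intro hlt
    rw [h] at hlt
    rcases Nat.eq_zero_or_pos (nrm a) with h0 | h0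
    · omega
    · nlinarith

set_option synthInstance.maxHeartbeats 1000000 in
lemma eis_irred_prime : ∀ p : Eis, Irreducible p → Prime p := fun _ h =>
  (irreducible_iff_prime).1 h

lemma eis_exists_factor : ∀ a : Eis, ¬IsUnit a → a ≠ 0 → ∃ i, Irreducible i ∧ i ∣ a :=
  fun _ h1 h2 => WfDvdMonoid.exists_irreducible_factor h1 h2

lemma ωE_coe : ((ωE : Eis) : ℂ) = ω := rfl

lemma three_coe : (((3:Eis)):ℂ) = 3 := rfl

lemma normSq_coords_int (a b : ℤ) :
    Complex.normSq ((a : ℂ) + b * ω) = (a:ℝ)^2 - (a:ℝ)*(b:ℝ) + (b:ℝ)^2 := by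
  have := normSq_coords (a:ℝ) (b:ℝ)
  push_cast at this ⊢
  exact this

lemma isUnit_of_normSq_eq_one (x : Eis) (h : Complex.normSq (x:ℂ) = 1) : IsUnit x := by
  obtain ⟨a, b, hab⟩ := exists_coords x
  refine IsUnit.of_mul_eq_one (a := x) (mkE (a - b) (-b)) (eis_ext ?_)
  push_cast [mkE_coe, hab]
  rw [hab, normSq_coords_int] at h
  have h2' : (a:ℂ)^2 - a*b + b^2 = 1 := by exact_mod_cast h
  linear_combination h2' - (b:ℂ)^2 * omega_sq

lemma isUnit_normSq {x : Eis} (h : IsUnit x) : Complex.normSq (x:ℂ) = 1 := by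
  obtain ⟨y, hy⟩ := isUnit_iff_exists_inv.1 h
  have h1 : Complex.normSq (x:ℂ) * Complex.normSq (y:ℂ) = 1 := by
    rw [← map_mul]
    have hxy : (x:ℂ) * (y:ℂ) = ((x*y : Eis):ℂ) := by push_cast; ring
    rw [hxy, hy]
    simp
  have hx : x ≠ 0 := by
    rintro rfl; rw [zero_mul] at hy; exact one_ne_zero hy.symm
  have hy0 : y ≠ 0 := by
    rintro rfl; rw [mul_zero] at hy; exact one_ne_zero hy.symm
  nlinarith [normSq_ge_one x hx, normSq_ge_one y hy0]

lemma three_not_unit : ¬ IsUnit (3 : Eis) := by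
  intro h
  have := isUnit_normSq h
  rw [three_coe] at this
  norm_num [Complex.normSq_apply] at this

lemma omega_unit : IsUnit (ωE) := by
  refine IsUnit.of_mul_eq_one (a := ωE) (mkE (-1) (-1)) (eis_ext ?_)
  push_cast [mkE_coe, ωE_coe]
  linear_combination -omega_sq

lemma lambda_not_unit : ¬ IsUnit (mkE 1 (-1)) := by
  intro h
  have := isUnit_normSq h
  rw [mkE_coe, normSq_coords_int] at this
  norm_num at this

lemma exists_assoc (π : Eis) (hcop : IsCoprime π 3) :
    ∃ u : Eis, IsUnit u ∧ (3:Eis) ∣ u * π - 1 := by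
  obtain ⟨a, b, hab⟩ := exists_coords π
  have ha := Int.mul_ediv_add_emod a 3
  have hb := Int.mul_ediv_add_emod b 3
  set q := a / 3 with hq
  set p := b / 3 with hp
  have hra : a % 3 = 0 ∨ a % 3 = 1 ∨ a % 3 = 2 := by omega
  have hrb : b % 3 = 0 ∨ b % 3 = 1 ∨ b % 3 = 2 := by omega
  have hunit_m1 : IsUnit (-1 : Eis) := IsUnit.neg isUnit_one
  have hunit_w : IsUnit (ωE) := omega_unit
  have hunit_nw : IsUnit (-ωE) := hunit_w.neg
  have hunit_w2 : IsUnit (mkE (-1) (-1)) := by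
    refine IsUnit.of_mul_eq_one ωE (eis_ext ?_)
    push_cast [mkE_coe, ωE_coe]
    linear_combination -omega_sq
  have hunit_nw2 : IsUnit (mkE 1 1) := by
    refine IsUnit.of_mul_eq_one (-ωE) (eis_ext ?_)
    push_cast [mkE_coe, ωE_coe]
    linear_combination -omega_sq
  have hd3 : mkE 1 (-1) ∣ (3:Eis) := ⟨mkE 2 1, eis_ext (by
    push_cast [mkE_coe, three_coe]
    linear_combination omega_sq)⟩
  rcases hra with h1|h1|h1 <;> rcases hrb with h2|h2|h2
  -- (0,0): 3 ∣ π, contradiction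
  · exfalso
    apply three_not_unit
    refine hcop.isUnit_of_dvd' ⟨mkE q p, eis_ext ?_⟩ dvd_rfl
    push_cast [mkE_coe, three_coe, hab]
    rw [show (a:ℂ) = 3*q by exact_mod_cast (by omega : a = 3*q),
        show (b:ℂ) = 3*p by exact_mod_cast (by omega : b = 3*p)]
    ring
  -- (0,1): u = ω²
  · refine ⟨mkE (-1) (-1), hunit_w2, ⟨mkE (p - q) (-q), eis_ext ?_⟩⟩
    push_cast [mkE_coe, three_coe, hab]
    rw [show (a:ℂ) = 3*q by exact_mod_cast (by omega : a = 3*q),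
        show (b:ℂ) = 3*p + 1 by exact_mod_cast (by omega : b = 3*p + 1)]
    linear_combination (-(3*(p:ℂ)+1)) * omega_sq
  -- (0,2): u = -ω² = mkE 1 1
  · refine ⟨mkE 1 1, hunit_nw2, ⟨mkE (-(p+1)+q) q, eis_ext ?_⟩⟩
    push_cast [mkE_coe, three_coe, hab]
    rw [show (a:ℂ) = 3*q by exact_mod_cast (by omega : a = 3*q),
        show (b:ℂ) = 3*p + 2 by exact_mod_cast (by omega : b = 3*p + 2)]
    linear_combination ((3*(p:ℂ)+2)) * omega_sq
  -- (1,0): u = 1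
  · refine ⟨1, isUnit_one, ⟨mkE q p, eis_ext ?_⟩⟩
    push_cast [mkE_coe, three_coe, hab]
    rw [show (a:ℂ) = 3*q + 1 by exact_mod_cast (by omega : a = 3*q + 1),
        show (b:ℂ) = 3*p by exact_mod_cast (by omega : b = 3*p)]
    ring
  -- (1,1): u = -ω
  · refine ⟨-ωE, hunit_nw, ⟨mkE p (p - q), eis_ext ?_⟩⟩
    push_cast [mkE_coe, three_coe, ωE_coe, hab]
    rw [show (a:ℂ) = 3*q + 1 by exact_mod_cast (by omega : a = 3*q + 1),
        show (b:ℂ) = 3*p + 1 by exact_mod_cast (by omega : b = 3*p + 1)]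
    linear_combination (-(3*(p:ℂ)+1)) * omega_sq
  -- (1,2): λ ∣ π, contradiction
  · exfalso
    apply lambda_not_unit
    refine hcop.isUnit_of_dvd' ⟨mkE (2*q - p) (q+p+1), eis_ext ?_⟩ hd3
    push_cast [mkE_coe, hab]
    rw [show (a:ℂ) = 3*q + 1 by exact_mod_cast (by omega : a = 3*q + 1),
        show (b:ℂ) = 3*p + 2 by exact_mod_cast (by omega : b = 3*p + 2)]
    linear_combination ((q:ℂ)+p+1) * omega_sq
  -- (2,0): u = -1
  · refine ⟨-1, hunit_m1, ⟨mkE (-(q+1)) (-p), eis_ext ?_⟩⟩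
    push_cast [mkE_coe, three_coe, hab]
    rw [show (a:ℂ) = 3*q + 2 by exact_mod_cast (by omega : a = 3*q + 2),
        show (b:ℂ) = 3*p by exact_mod_cast (by omega : b = 3*p)]
    ring
  -- (2,1): λ ∣ π, contradiction
  · exfalso
    apply lambda_not_unit
    refine hcop.isUnit_of_dvd' ⟨mkE (2*q + 1 - p) (q+p+1), eis_ext ?_⟩ hd3
    push_cast [mkE_coe, hab]
    rw [show (a:ℂ) = 3*q + 2 by exact_mod_cast (by omega : a = 3*q + 2),
        show (b:ℂ) = 3*p + 1 by exact_mod_cast (by omega : b = 3*p + 1)]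
    linear_combination ((q:ℂ)+p+1) * omega_sq
  -- (2,2): u = ω
  · refine ⟨ωE, hunit_w, ⟨mkE (-(p+1)) (q-p), eis_ext ?_⟩⟩
    push_cast [mkE_coe, three_coe, ωE_coe, hab]
    rw [show (a:ℂ) = 3*q + 2 by exact_mod_cast (by omega : a = 3*q + 2),
        show (b:ℂ) = 3*p + 2 by exact_mod_cast (by omega : b = 3*p + 2)]
    linear_combination ((3*(p:ℂ)+2)) * omega_sq

lemma cube_roots {z : ℂ} (h : z ^ 3 = 1) : z = 1 ∨ z = ω ∨ z = ω ^ 2 := by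
  have h0 : (z - 1) * ((z - ω) * (z - ω^2)) = 0 := by
    linear_combination h + (z - 1) * omega_cube + (z - z^2) * omega_sq
  rcases mul_eq_zero.1 h0 with h1 | h1
  · exact Or.inl (sub_eq_zero.1 h1)
  rcases mul_eq_zero.1 h1 with h2 | h2
  · exact Or.inr (Or.inl (sub_eq_zero.1 h2))
  · exact Or.inr (Or.inr (sub_eq_zero.1 h2))

/-- N(x) ≡ 1 mod 3 when x ≡ 1 mod 3 -/
lemma exists_e (x : Eis) (h : (3:Eis) ∣ x - 1) : ∃ k : ℕ, Complex.normSq (x:ℂ) = 3 * k + 1 := by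
  obtain ⟨c, hc⟩ := h
  obtain ⟨a, b, hab⟩ := exists_coords c
  have hx : (x:ℂ) = ((1 + 3*a : ℤ) : ℂ) + ((3*b : ℤ) : ℂ) * ω := by
    have : (x:ℂ) = 1 + 3 * (c:ℂ) := by
      have := congrArg (fun t : Eis => (t:ℂ)) hc
      push_cast [three_coe] at this
      push_cast
      linear_combination this
    rw [this, hab]; push_cast; ring
  set t : ℤ := 2*a - b + 3*a^2 - 3*a*b + 3*b^2 with ht
  have hns : Complex.normSq (x:ℂ) = ((1 + 3*t : ℤ) : ℝ) := by
    rw [hx, normSq_coords_int, ht]; push_cast; ring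
  have htnn : 0 ≤ t := by
    by_contra hneg
    push_neg at hneg
    have : ((1 + 3*t : ℤ) : ℝ) < 0 := by exact_mod_cast (by omega : (1 + 3*t : ℤ) < 0)
    have := Complex.normSq_nonneg (x:ℂ)
    linarith [hns ▸ this]
  refine ⟨t.toNat, ?_⟩
  rw [hns]
  exact_mod_cast (by omega : (1 + 3*t : ℤ) = 3 * (t.toNat : ℤ) + 1)

lemma omega_coprime (π : Eis) : IsCoprime ωE π := by
  obtain ⟨b, hb⟩ := isUnit_iff_exists_inv'.1 omega_unit
  exact ⟨b, 0, by rw [zero_mul, add_zero]; exact hb⟩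

lemma normSq_diff_roots {r s : ℕ} (hr : r < 3) (hs : s < 3) (hne : ω ^ r ≠ ω ^ s) :
    Complex.normSq (ω ^ r - ω ^ s) = 3 := by
  have e0 : ω ^ 0 = ((1:ℤ):ℂ) + ((0:ℤ):ℂ) * ω := by push_cast; ring
  have e1 : ω ^ 1 = ((0:ℤ):ℂ) + ((1:ℤ):ℂ) * ω := by push_cast; ring
  have e2 : ω ^ 2 = ((-1:ℤ):ℂ) + ((-1:ℤ):ℂ) * ω := by push_cast; linear_combination omega_sq
  clear e0 e1 e2
  interval_cases r <;> interval_cases s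
  · exact absurd rfl hne
  · rw [show ω ^ 0 - ω ^ 1 = ((1:ℤ):ℂ) + ((-1:ℤ):ℂ) * ω by push_cast; ring, normSq_coords_int]
    norm_num
  · rw [show ω ^ 0 - ω ^ 2 = ((2:ℤ):ℂ) + ((1:ℤ):ℂ) * ω by push_cast; linear_combination -omega_sq,
      normSq_coords_int]
    norm_num
  · rw [show ω ^ 1 - ω ^ 0 = ((-1:ℤ):ℂ) + ((1:ℤ):ℂ) * ω by push_cast; ring, normSq_coords_int]
    norm_num
  · exact absurd rfl hne
  · rw [show ω ^ 1 - ω ^ 2 = ((1:ℤ):ℂ) + ((2:ℤ):ℂ) * ω by push_cast; linear_combination -omega_sq,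
      normSq_coords_int]
    norm_num
  · rw [show ω ^ 2 - ω ^ 0 = ((-2:ℤ):ℂ) + ((-1:ℤ):ℂ) * ω by push_cast; linear_combination omega_sq,
      normSq_coords_int]
    norm_num
  · rw [show ω ^ 2 - ω ^ 1 = ((-1:ℤ):ℂ) + ((-2:ℤ):ℂ) * ω by push_cast; linear_combination omega_sq,
      normSq_coords_int]
    norm_num
  · exact absurd rfl hne

theorem prime_case (χ : Eis → Eis → ℂ) (hχ : IsCubicSymbol χ) (π : Eis) (hp : Prime π)
    (h1 : (3:Eis) ∣ π - 1) (e : ℕ) (he : Complex.normSq (π:ℂ) = 3 * e + 1) :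
    χ π ωE = ω ^ e := by
  have hcop : IsCoprime ωE π := omega_coprime π
  obtain ⟨u, hu, hdvd⟩ := hχ.spec π ωE e hp (Or.inl h1) hcop he
  have hu3 : (u:ℂ) ^ 3 = 1 := by rw [hu]; exact hχ.cube π ωE hp (Or.inl h1) hcop
  have he3 : ω ^ e = ω ^ (e % 3) := by
    conv_lhs => rw [← Nat.div_add_mod e 3]
    rw [pow_add, pow_mul, omega_cube, one_pow, one_mul]
  suffices h : (u:ℂ) = ω ^ (e % 3) by rw [← hu, h, ← he3]
  by_contra hne
  have hdC : ((ωE ^ e - u : Eis):ℂ) = ω ^ (e % 3) - (u:ℂ) := by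
    push_cast [ωE_coe]
    rw [← he3]
  have hdne : (ωE ^ e - u) ≠ 0 := by
    intro h0
    apply hne
    have hz : ((ωE ^ e - u : Eis):ℂ) = 0 := by rw [h0]; exact coe_zero_iff.2 rfl
    rw [hdC] at hz
    exact (sub_eq_zero.1 hz).symm
  obtain ⟨c, hc⟩ := hdvd
  have hcne : c ≠ 0 := by
    rintro rfl
    rw [mul_zero] at hc
    exact hdne hc
  have h3 : Complex.normSq ((ωE ^ e - u : Eis):ℂ) = 3 := by
    rw [hdC]
    have hu' := cube_roots hu3
    have hrlt : e % 3 < 3 := Nat.mod_lt _ (by norm_num)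
    have : (u:ℂ) = ω ^ 0 ∨ (u:ℂ) = ω ^ 1 ∨ (u:ℂ) = ω ^ 2 := by
      rcases hu' with h|h|h
      · exact Or.inl (by rw [h, pow_zero])
      · exact Or.inr (Or.inl (by rw [h, pow_one]))
      · exact Or.inr (Or.inr h)
    rcases this with h|h|h <;>
      · rw [h]
        exact normSq_diff_roots hrlt (by norm_num) (fun heq => hne (by rw [h, heq]))
  have hmul : Complex.normSq ((ωE ^ e - u : Eis):ℂ)
      = Complex.normSq (π:ℂ) * Complex.normSq (c:ℂ) := by
    rw [hc]; push_cast; rw [map_mul]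
  have hc1 : 1 ≤ Complex.normSq (c:ℂ) := normSq_ge_one c hcne
  have hπ1 : 1 ≤ Complex.normSq (π:ℂ) := by
    rw [he]; have : (0:ℝ) ≤ (e:ℝ) := Nat.cast_nonneg e; linarith
  have : Complex.normSq (π:ℂ) ≤ 3 := by
    rw [h3] at hmul; nlinarith
  have he0 : e = 0 := by
    by_contra h0
    have h1e : (1:ℝ) ≤ (e:ℝ) := by exact_mod_cast Nat.one_le_iff_ne_zero.2 h0
    rw [he] at this; linarith
  rw [he0] at he
  push_cast at he
  norm_num at he
  exact hp.not_unit (isUnit_of_normSq_eq_one π he)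

theorem cubic_symbol_omega (χ : Eis → Eis → ℂ) (hχ : IsCubicSymbol χ) (n : Eis)
    (hn : (3 : Eis) ∣ n - 1) (hcop : IsCoprime n 3) (e : ℕ)
    (he : Complex.normSq (n : ℂ) = 3 * e + 1) :
    χ n ωE = ω ^ e := by
  induction e using Nat.strong_induction_on generalizing n with
  | _ e ih =>
  by_cases hu : IsUnit n
  · -- unit case: n = 1, e = 0
    have h1 : Complex.normSq (n:ℂ) = 1 := isUnit_normSq hu
    have he0 : e = 0 := by
      rw [h1] at he
      have h2 : (3:ℝ) * e = 0 := by linarith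
      have h3 : (e:ℝ) = 0 := by linarith
      exact_mod_cast h3
    have hn1 : n = 1 := by
      by_contra hne
      obtain ⟨c, hc⟩ := hn
      have hcne : c ≠ 0 := by
        rintro rfl; rw [mul_zero, sub_eq_zero] at hc; exact hne hc
      have h9 : (9:ℝ) ≤ Complex.normSq ((n:ℂ) - 1) := by
        have hh : (n:ℂ) - 1 = 3 * (c:ℂ) := by
          have := congrArg (fun t : Eis => (t:ℂ)) hc
          push_cast [three_coe] at this
          push_cast
          linear_combination this
        rw [hh, map_mul]
        have := normSq_ge_one c hcne
        have h33 : Complex.normSq (3:ℂ) = 9 := by norm_num [Complex.normSq_apply]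
        rw [h33]; linarith
      have hle : Complex.normSq ((n:ℂ) - 1) ≤ 4 := by
        simp only [Complex.normSq_apply, Complex.sub_re, Complex.sub_im, Complex.one_re,
          Complex.one_im] at h1 ⊢
        nlinarith [sq_nonneg ((n:ℂ).re + 1)]
      linarith
    rw [he0, hn1, hχ.map_one_left, pow_zero]
  · -- composite case
    have hn0 : n ≠ 0 := by
      intro h0
      rw [h0] at he
      have hz : ((0:Eis):ℂ) = 0 := coe_zero_iff.2 rfl
      rw [hz, map_zero] at he
      have : (0:ℝ) ≤ (e:ℝ) := Nat.cast_nonneg e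
      linarith
    obtain ⟨π₀, hirr, hdvd⟩ := eis_exists_factor n hu hn0
    have hp₀ : Prime π₀ := eis_irred_prime _ hirr
    have hcop₀ : IsCoprime π₀ (3:Eis) := hcop.of_isCoprime_of_dvd_left hdvd
    obtain ⟨v, hv, hv3⟩ := exists_assoc π₀ hcop₀
    have hassoc : Associated π₀ (v * π₀) := ⟨hv.unit, by rw [IsUnit.unit_spec]; ring⟩
    set π := v * π₀ with hπ
    have hpπ : Prime π := hassoc.prime hp₀
    obtain ⟨m, hm⟩ := (hassoc.dvd_iff_dvd_left).1 hdvd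
    have h3π : (3:Eis) ∣ π - 1 := hv3
    have hm3 : (3:Eis) ∣ m - 1 := by
      have h1 : (3:Eis) ∣ (π - 1) * m := h3π.mul_right m
      have h2 : n - m = (π - 1) * m := by rw [hm]; ring
      have h4 : (3:Eis) ∣ (n - 1) - (n - m) := dvd_sub hn (h2 ▸ h1)
      have h5 : (n - 1) - (n - m) = m - 1 := by ring
      rwa [h5] at h4
    have hmcop : IsCoprime m 3 := hcop.of_isCoprime_of_dvd_left ⟨π, by rw [hm]; ring⟩
    obtain ⟨e₁, he₁⟩ := exists_e π h3π
    obtain ⟨e₂, he₂⟩ := exists_e m hm3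
    have hmulns : Complex.normSq (n:ℂ) = Complex.normSq (π:ℂ) * Complex.normSq (m:ℂ) := by
      rw [hm]; push_cast; rw [map_mul]
    have hnat : 3*e + 1 = (3*e₁+1) * (3*e₂+1) := by
      have : (3*(e:ℝ)+1) = (3*(e₁:ℝ)+1) * (3*(e₂:ℝ)+1) := by
        rw [← he, hmulns, he₁, he₂]
      exact_mod_cast this
    have hnat' : 3*e + 1 = 9*(e₁*e₂) + 3*e₁ + 3*e₂ + 1 := by rw [hnat]; ring
    have he₁pos : 1 ≤ e₁ := by
      rcases Nat.eq_zero_or_pos e₁ with h0 | h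
      · exfalso
        apply hpπ.not_unit
        apply isUnit_of_normSq_eq_one
        rw [he₁, h0]; norm_num
      · exact h
    have heq : e = e₁ + e₂ + 3*(e₁*e₂) := by omega
    have hlt : e₂ < e := by omega
    have hχm := ih e₂ hlt m hm3 hmcop he₂
    have hχπ := prime_case χ hχ π hpπ h3π e₁ he₁
    rw [hm, hχ.mul_left, hχπ, hχm, heq, pow_add, pow_mul, omega_cube, one_pow, mul_one, pow_add]
end

section
/- Optimization lemma: Suppose L(H) = Σ_{i=1}^m A_i H^{a_i} + Σ_{j=1}^n B_j H^{−b_j} where all A_i, B_j, a_i, b_j are positive reals, and let 0 < H₁ ≤ H₂. Then there exists H with H₁ ≤ H ≤ H₂ such that L(H) ≪ Σ_{i,j} (A_i^{b_j} B_j^{a_i})^{1/(a_i+b_j)} + Σ_i A_i H₁^{a_i} + Σ_j B_j H₂^{−b_j}, where the implied constant depends only on m and n. -/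
open Finset Real Set

set_option maxHeartbeats 800000 in
/-- Lemma 2.4 of Graham–Kolesnik: optimization of a sum of increasing and decreasing
power functions of a parameter `H` restricted to `[H₁, H₂]`; the constant `C` depends
only on `m` and `n`. -/
theorem graham_kolesnik_optimization (m n : ℕ) :
    ∃ C : ℝ, 0 < C ∧ ∀ (A a : Fin m → ℝ) (B b : Fin n → ℝ),
      (∀ i, 0 < A i) → (∀ i, 0 < a i) → (∀ j, 0 < B j) → (∀ j, 0 < b j) →
      ∀ H₁ H₂ : ℝ, 0 < H₁ → H₁ ≤ H₂ →
      ∃ H : ℝ, H₁ ≤ H ∧ H ≤ H₂ ∧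
        (∑ i, A i * H ^ (a i)) + (∑ j, B j * H ^ (-(b j))) ≤
          C * ((∑ i, ∑ j, (A i ^ (b j) * B j ^ (a i)) ^ (1 / (a i + b j))) +
            (∑ i, A i * H₁ ^ (a i)) + (∑ j, B j * H₂ ^ (-(b j)))) := by
  refine ⟨2 * (m + n + 1), by positivity, ?_⟩
  intro A a B b hA ha hB hb H₁ H₂ hH₁ hH
  set f : ℝ → ℝ := fun H => ∑ i, A i * H ^ (a i) with hf
  set g : ℝ → ℝ := fun H => ∑ j, B j * H ^ (-(b j)) with hg
  have hH₂ : 0 < H₂ := lt_of_lt_of_le hH₁ hH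
  set Gsum : ℝ := ∑ i, ∑ j, (A i ^ (b j) * B j ^ (a i)) ^ (1 / (a i + b j)) with hGs
  have hGsum : 0 ≤ Gsum := by
    apply Finset.sum_nonneg; intro i _
    apply Finset.sum_nonneg; intro j _
    have := hA i; have := hB j; positivity
  have hS1 : 0 ≤ ∑ i, A i * H₁ ^ (a i) := by
    apply Finset.sum_nonneg; intro i _
    have := hA i; positivity
  have hS2 : 0 ≤ ∑ j, B j * H₂ ^ (-(b j)) := by
    apply Finset.sum_nonneg; intro j _
    have := hB j; positivity
  have hC1 : (1 : ℝ) ≤ (m : ℝ) + n + 1 := by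
    have h1 : (0 : ℝ) ≤ (m : ℝ) := Nat.cast_nonneg m
    have h2 : (0 : ℝ) ≤ (n : ℝ) := Nat.cast_nonneg n
    linarith
  by_cases h1 : g H₁ ≤ f H₁
  · refine ⟨H₁, le_refl _, hH, ?_⟩
    have hh : f H₁ + g H₁ ≤ 2 * f H₁ := by linarith
    calc f H₁ + g H₁ ≤ 2 * (∑ i, A i * H₁ ^ (a i)) := hh
      _ ≤ 2 * ((m + n + 1) * (Gsum + (∑ i, A i * H₁ ^ (a i)) +
            (∑ j, B j * H₂ ^ (-(b j))))) := by nlinarith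
      _ = _ := by ring
  by_cases h2 : f H₂ ≤ g H₂
  · refine ⟨H₂, hH, le_refl _, ?_⟩
    have hh : f H₂ + g H₂ ≤ 2 * g H₂ := by linarith
    calc f H₂ + g H₂ ≤ 2 * (∑ j, B j * H₂ ^ (-(b j))) := hh
      _ ≤ 2 * ((m + n + 1) * (Gsum + (∑ i, A i * H₁ ^ (a i)) +
            (∑ j, B j * H₂ ^ (-(b j))))) := by nlinarith
      _ = _ := by ring
  push_neg at h1 h2
  have hcont : ContinuousOn (fun H => f H - g H) (Icc H₁ H₂) := by
    apply ContinuousOn.sub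
    · apply continuousOn_finset_sum; intro i _
      exact continuousOn_const.mul (continuousOn_id.rpow_const
        (fun x hx => Or.inr (ha i).le))
    · apply continuousOn_finset_sum; intro j _
      exact continuousOn_const.mul (continuousOn_id.rpow_const
        (fun x hx => Or.inl (ne_of_gt (lt_of_lt_of_le hH₁ hx.1))))
  have hmem : (0 : ℝ) ∈ Icc (f H₁ - g H₁) (f H₂ - g H₂) :=
    ⟨by linarith, by linarith⟩
  obtain ⟨H, hHmem, hHeq⟩ := intermediate_value_Icc hH hcont hmem
  have hfg : f H = g H := by simp only at hHeq; linarith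
  have hHpos : 0 < H := lt_of_lt_of_le hH₁ hHmem.1
  have hfH₂pos : 0 < f H₂ := lt_of_le_of_lt (Finset.sum_nonneg fun j _ => by
      have := hB j; positivity) h2
  have hm : 0 < m := by
    by_contra hm0
    have hm' : m = 0 := by omega
    subst hm'
    simp [hf] at hfH₂pos
  have hgH₁pos : 0 < g H₁ := lt_of_le_of_lt (Finset.sum_nonneg fun i _ => by
      have := hA i; positivity) h1
  have hn : 0 < n := by
    by_contra hn0
    have hn' : n = 0 := by omega
    subst hn'
    simp [hg] at hgH₁pos
  -- pick the dominating increasing term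
  have hex_i : ∃ i, f H ≤ (m : ℝ) * (A i * H ^ (a i)) := by
    by_contra hc
    push_neg at hc
    have hmR : (0 : ℝ) < m := by exact_mod_cast hm
    have hlt : f H < ∑ _i : Fin m, f H / m := by
      refine Finset.sum_lt_sum_of_nonempty
        (Finset.univ_nonempty_iff.mpr (Fin.pos_iff_nonempty.mp hm)) ?_
      intro i _
      rw [lt_div_iff₀ hmR]
      have := hc i
      nlinarith
    rw [Finset.sum_const, Finset.card_univ, Fintype.card_fin, nsmul_eq_mul,
      mul_div_cancel₀ _ hmR.ne'] at hlt
    exact lt_irrefl _ hlt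
  have hex_j : ∃ j, g H ≤ (n : ℝ) * (B j * H ^ (-(b j))) := by
    by_contra hc
    push_neg at hc
    have hnR : (0 : ℝ) < n := by exact_mod_cast hn
    have hlt : g H < ∑ _j : Fin n, g H / n := by
      refine Finset.sum_lt_sum_of_nonempty
        (Finset.univ_nonempty_iff.mpr (Fin.pos_iff_nonempty.mp hn)) ?_
      intro j _
      rw [lt_div_iff₀ hnR]
      have := hc j
      nlinarith
    rw [Finset.sum_const, Finset.card_univ, Fintype.card_fin, nsmul_eq_mul,
      mul_div_cancel₀ _ hnR.ne'] at hlt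
    exact lt_irrefl _ hlt
  obtain ⟨i, hi⟩ := hex_i
  obtain ⟨j, hj⟩ := hex_j
  set x : ℝ := A i * H ^ (a i) with hxdef
  set y : ℝ := B j * H ^ (-(b j)) with hydef
  set G : ℝ := (A i ^ (b j) * B j ^ (a i)) ^ (1 / (a i + b j)) with hGdef
  have hx : 0 < x := by have := hA i; positivity
  have hy : 0 < y := by have := hB j; positivity
  have hab : 0 < a i + b j := add_pos (ha i) (hb j)
  have hABpos : 0 < A i ^ (b j) * B j ^ (a i) := by
    have := hA i; have := hB j; positivity
  have hG1 : G ^ (a i + b j) = A i ^ (b j) * B j ^ (a i) := by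
    rw [hGdef, ← Real.rpow_mul hABpos.le, one_div, inv_mul_cancel₀ hab.ne',
      Real.rpow_one]
  have hxy : x ^ (b j) * y ^ (a i) = A i ^ (b j) * B j ^ (a i) := by
    rw [hxdef, hydef, Real.mul_rpow (hA i).le (by positivity),
      Real.mul_rpow (hB j).le (by positivity),
      ← Real.rpow_mul hHpos.le, ← Real.rpow_mul hHpos.le]
    have hone : H ^ (a i * b j) * H ^ (-(b j) * a i) = 1 := by
      rw [← Real.rpow_add hHpos, show a i * b j + -(b j) * a i = 0 by ring,
        Real.rpow_zero]
    linear_combination A i ^ (b j) * B j ^ (a i) * hone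
  have hminpos : 0 < min x y := lt_min hx hy
  have hminpow : (min x y) ^ (a i + b j) ≤ x ^ (b j) * y ^ (a i) := by
    rw [Real.rpow_add hminpos, mul_comm (x ^ (b j))]
    have h1 : (min x y) ^ (a i) ≤ y ^ (a i) :=
      Real.rpow_le_rpow hminpos.le (min_le_right x y) (ha i).le
    have h2 : (min x y) ^ (b j) ≤ x ^ (b j) :=
      Real.rpow_le_rpow hminpos.le (min_le_left x y) (hb j).le
    exact mul_le_mul h1 h2 (by positivity) (by positivity)
  have hminG : min x y ≤ G := by
    rw [← Real.rpow_le_rpow_iff hminpos.le (by rw [hGdef]; positivity) hab, hG1]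
    calc (min x y) ^ (a i + b j) ≤ x ^ (b j) * y ^ (a i) := hminpow
      _ = A i ^ (b j) * B j ^ (a i) := hxy
  have hGle : G ≤ Gsum := by
    rw [hGdef, hGs]
    have h1 : (A i ^ (b j) * B j ^ (a i)) ^ (1 / (a i + b j)) ≤
        ∑ j', (A i ^ (b j') * B j' ^ (a i)) ^ (1 / (a i + b j')) :=
      Finset.single_le_sum
        (f := fun j' => (A i ^ (b j') * B j' ^ (a i)) ^ (1 / (a i + b j')))
        (fun j' _ => by have := hA i; have := hB j'; positivity) (Finset.mem_univ j)
    refine le_trans h1 ?_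
    exact Finset.single_le_sum
      (f := fun i' => ∑ j', (A i' ^ (b j') * B j' ^ (a i')) ^ (1 / (a i' + b j')))
      (fun i' _ => Finset.sum_nonneg fun j' _ => by
        have := hA i'; have := hB j'; positivity) (Finset.mem_univ i)
  have hmn : (m : ℝ) ≤ (m : ℝ) + n + 1 := by
    have h2 : (0 : ℝ) ≤ (n : ℝ) := Nat.cast_nonneg n
    linarith
  have hnn : (n : ℝ) ≤ (m : ℝ) + n + 1 := by
    have h2 : (0 : ℝ) ≤ (m : ℝ) := Nat.cast_nonneg m
    linarith
  have hfmin : f H ≤ ((m : ℝ) + n + 1) * min x y := by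
    rcases min_cases x y with ⟨hmx, _⟩ | ⟨hmy, _⟩
    · rw [hmx]; exact le_trans hi (mul_le_mul_of_nonneg_right hmn hx.le)
    · rw [hmy, hfg]; exact le_trans hj (mul_le_mul_of_nonneg_right hnn hy.le)
  have hfG : f H ≤ ((m : ℝ) + n + 1) * Gsum := by
    calc f H ≤ ((m : ℝ) + n + 1) * min x y := hfmin
      _ ≤ ((m : ℝ) + n + 1) * G :=
        mul_le_mul_of_nonneg_left hminG (by linarith)
      _ ≤ ((m : ℝ) + n + 1) * Gsum :=
        mul_le_mul_of_nonneg_left hGle (by linarith)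
  refine ⟨H, hHmem.1, hHmem.2, ?_⟩
  calc f H + g H = 2 * f H := by rw [hfg]; ring
    _ ≤ 2 * (((m : ℝ) + n + 1) * Gsum) := by linarith
    _ ≤ 2 * ((m + n + 1) * (Gsum + (∑ i, A i * H₁ ^ (a i)) +
          (∑ j, B j * H₂ ^ (-(b j))))) := by
        have hmul := mul_le_mul_of_nonneg_left
          (show Gsum ≤ Gsum + (∑ i, A i * H₁ ^ (a i)) + (∑ j, B j * H₂ ^ (-(b j)))
            by linarith)
          (show (0 : ℝ) ≤ (m : ℝ) + n + 1 by linarith)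
        linarith
    _ = _ := by ring
end

section
/- Euler product identity: for a completely multiplicative function ψ on ideals of a number field K with |ψ(𝔭)| ≤ 1, and for Re(s) > 1, one has Σ over squarefree ideals 𝔮 of ψ(𝔮) N(𝔮)^{−s} Σ_{𝔟 | 𝔮} ψ(𝔟) = Π_𝔭 (1 + ψ(𝔭)(1+ψ(𝔭)) N(𝔭)^{−s}), and this equals L(s,ψ) L(s,ψ²) F(s) where F(s) = Π_𝔭 (1 − (ψ²(𝔭)+ψ³(𝔭)+ψ⁴(𝔭)) N(𝔭)^{−2s} + (ψ⁴(𝔭)+ψ⁵(𝔭)) N(𝔭)^{−3s}) converges absolutely for Re(s) > 1/2. -/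
open scoped NumberField

open UniqueFactorizationMonoid Ideal

section EulerAux


open Finset in
theorem aux_summable_finset_prod {ι : Type*} {f : ι → ℝ} (h0 : ∀ i, 0 ≤ f i)
    (hf : Summable f) : Summable (fun S : Finset ι => ∏ i ∈ S, f i) := by
  apply summable_of_sum_le (c := Real.exp (∑' i, f i))
    (fun S => Finset.prod_nonneg fun i _ => h0 i)
  intro 𝒜
  classical
  have hsub : 𝒜 ⊆ (𝒜.sup id).powerset := by
    intro S hS
    simp only [Finset.mem_powerset]
    exact Finset.le_sup (f := id) hS
  calc ∑ S ∈ 𝒜, ∏ i ∈ S, f i ≤ ∑ S ∈ (𝒜.sup id).powerset, ∏ i ∈ S, f i := by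
        apply Finset.sum_le_sum_of_subset_of_nonneg hsub
        intro S _ _; exact Finset.prod_nonneg fun i _ => h0 i
    _ = ∏ i ∈ 𝒜.sup id, (f i + 1) := by
        rw [Finset.prod_add]; simp
    _ ≤ ∏ i ∈ 𝒜.sup id, Real.exp (f i) := by
        apply Finset.prod_le_prod
        · intro i _; have := h0 i; linarith
        · intro i _; exact Real.add_one_le_exp (f i)
    _ = Real.exp (∑ i ∈ 𝒜.sup id, f i) := by rw [Real.exp_sum]
    _ ≤ Real.exp (∑' i, f i) := by
        apply Real.exp_le_exp.2
        exact Summable.sum_le_tsum _ (fun i _ => h0 i) hf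

theorem aux_summable_finset_prod_c {ι : Type*} {f : ι → ℂ}
    (hf : Summable (fun i => ‖f i‖)) : Summable (fun S : Finset ι => ∏ i ∈ S, f i) := by
  apply Summable.of_norm
  simpa [norm_prod] using aux_summable_finset_prod (fun i => norm_nonneg (f i)) hf

theorem aux_hasProd_one_add {ι : Type*} {f : ι → ℂ}
    (hf : Summable (fun i => ‖f i‖)) :
    HasProd (fun i => 1 + f i) (∑' S : Finset ι, ∏ i ∈ S, f i) := by
  classical
  have hsum := (aux_summable_finset_prod_c hf).hasSum
  rw [HasSum] at hsum
  have hpow : Filter.Tendsto (fun U : Finset ι => U.powerset) Filter.atTop Filter.atTop := by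
    rw [Filter.tendsto_atTop_atTop]
    intro 𝒜
    refine ⟨𝒜.sup id, fun U hU => ?_⟩
    intro S hS
    simp only [Finset.mem_powerset]
    exact le_trans (Finset.le_sup (f := id) hS) hU
  have := hsum.comp hpow
  rw [HasProd]
  convert this using 2 with U
  rw [Function.comp_apply]
  have : ∀ i ∈ U, (1 + f i) = (f i + 1) := fun i _ => add_comm _ _
  rw [Finset.prod_congr rfl this, Finset.prod_add]
  simp
  rfl


theorem aux_norm_cpow (N : ℕ) (hN : 0 < N) (z : ℂ) : ‖(N : ℂ) ^ z‖ = (N : ℝ) ^ z.re := by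
  rw [show ((N : ℂ)) = (((N : ℝ) : ℂ)) by norm_cast,
    Complex.norm_cpow_eq_rpow_re_of_pos (by exact_mod_cast hN)]

theorem aux_cast_prod_cpow {ι : Type*} (S : Finset ι) (n : ι → ℕ) (h : ∀ i ∈ S, 0 < n i)
    (z : ℂ) : ((∏ i ∈ S, n i : ℕ) : ℂ) ^ z = ∏ i ∈ S, ((n i : ℕ) : ℂ) ^ z := by
  classical
  induction S using Finset.cons_induction with
  | empty => simp [Complex.one_cpow]
  | cons i S hi ih =>
    rw [Finset.prod_cons, Finset.prod_cons, ← ih (fun j hj => h j (Finset.mem_cons_of_mem hj))]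
    have h1 : (0:ℝ) ≤ (n i : ℝ) := by positivity
    have h2 : (0:ℝ) ≤ ((∏ j ∈ S, n j : ℕ) : ℝ) := by positivity
    have hcast : ((n i * ∏ j ∈ S, n j : ℕ) : ℂ) = (((n i : ℝ) : ℂ) * (((∏ j ∈ S, n j : ℕ) : ℝ) : ℂ)) := by
      norm_cast
    rw [hcast, Complex.mul_cpow_ofReal_nonneg h1 h2]
    norm_cast

theorem aux_one_sub_ne_zero {x : ℂ} (hx : ‖x‖ ≤ 1/2) : (1 : ℂ) - x ≠ 0 := by
  intro h
  have : ‖(1:ℂ)‖ - ‖x‖ ≤ ‖1 - x‖ := norm_sub_norm_le _ _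
  rw [h] at this
  simp only [norm_one, norm_zero] at this
  linarith

theorem aux_inv_bound {x : ℂ} (hx : ‖x‖ ≤ 1/2) : ‖(1 - x)⁻¹ - 1‖ ≤ 2 * ‖x‖ := by
  have hne := aux_one_sub_ne_zero hx
  have h1 : (1:ℝ)/2 ≤ ‖1 - x‖ := by
    have : ‖(1:ℂ)‖ - ‖x‖ ≤ ‖1 - x‖ := norm_sub_norm_le _ _
    simp only [norm_one] at this
    linarith
  have heq : (1 - x)⁻¹ - 1 = x * (1 - x)⁻¹ := by
    field_simp
    ring
  rw [heq, norm_mul, norm_inv]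
  have hinv : ‖1 - x‖⁻¹ ≤ 2 := by
    rw [inv_le_comm₀ (by linarith) (by norm_num)]
    linarith
  calc ‖x‖ * ‖1 - x‖⁻¹ ≤ ‖x‖ * 2 := by
        exact mul_le_mul_of_nonneg_left hinv (norm_nonneg x)
    _ = 2 * ‖x‖ := by ring

abbrev PP (R : Type*) [CommRing R] := {I : Ideal R // I.IsPrime ∧ I ≠ ⊥}

section
variable {R : Type*} [CommRing R] [IsDedekindDomain R]


theorem aux_prime (𝔭 : PP R) : Prime 𝔭.1 := Ideal.prime_of_isPrime 𝔭.2.2 𝔭.2.1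

theorem aux_nf_prod (S : Finset (PP R)) :
    normalizedFactors (∏ 𝔭 ∈ S, 𝔭.1) = S.val.map Subtype.val := by
  rw [← Multiset.map_id (S.val.map Subtype.val)]
  rw [Finset.prod_eq_multiset_prod]
  rw [normalizedFactors_prod_of_prime]
  · simp
  · intro p hp
    simp only [Multiset.mem_map] at hp
    obtain ⟨𝔭, _, rfl⟩ := hp
    exact aux_prime 𝔭

theorem aux_prod_ne_zero (S : Finset (PP R)) : (∏ 𝔭 ∈ S, 𝔭.1) ≠ 0 := by
  rw [Finset.prod_ne_zero_iff]
  exact fun 𝔭 _ => (aux_prime 𝔭).ne_zero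

theorem aux_prod_inj : Function.Injective (fun S : Finset (PP R) => ∏ 𝔭 ∈ S, 𝔭.1) := by
  intro S T h
  simp only at h
  have := aux_nf_prod (R := R) S
  rw [h, aux_nf_prod] at this
  ext 𝔭
  rw [← Finset.mem_val, ← Finset.mem_val]
  constructor <;> intro h𝔭
  · have : 𝔭.1 ∈ T.val.map Subtype.val := this ▸ (Multiset.mem_map_of_mem _ h𝔭)
    obtain ⟨𝔮, h𝔮, he⟩ := Multiset.mem_map.1 this
    rwa [← Subtype.ext he]
  · have : 𝔭.1 ∈ S.val.map Subtype.val := this.symm ▸ (Multiset.mem_map_of_mem _ h𝔭)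
    obtain ⟨𝔮, h𝔮, he⟩ := Multiset.mem_map.1 this
    rwa [← Subtype.ext he]

theorem aux_sqfree (S : Finset (PP R)) : Squarefree (∏ 𝔭 ∈ S, 𝔭.1) := by
  rw [squarefree_iff_nodup_normalizedFactors (aux_prod_ne_zero S), aux_nf_prod]
  exact S.nodup.map Subtype.val_injective

theorem aux_surj {I : Ideal R} (hI : Squarefree I) :
    ∃ S : Finset (PP R), (∏ 𝔭 ∈ S, 𝔭.1) = I := by
  have hI0 : I ≠ 0 := hI.ne_zero
  have hnd : (normalizedFactors I).Nodup :=
    (squarefree_iff_nodup_normalizedFactors hI0).1 hI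
  classical
  have hp : ∀ x : {x // x ∈ (normalizedFactors I).toFinset},
      (x.1 : Ideal R).IsPrime ∧ (x.1 : Ideal R) ≠ ⊥ := by
    intro x
    have hpr : Prime (x.1 : Ideal R) :=
      prime_of_normalized_factor x.1 (Multiset.mem_toFinset.1 x.2)
    exact ⟨Ideal.isPrime_of_prime hpr, hpr.ne_zero⟩
  refine ⟨(normalizedFactors I).toFinset.attach.map
    ⟨fun x => ⟨x.1, hp x⟩, fun a b hab => Subtype.ext (by have h := congrArg Subtype.val hab; exact h)⟩, ?_⟩
  rw [Finset.prod_map]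
  show ∏ x ∈ (normalizedFactors I).toFinset.attach, (x.1 : Ideal R) = I
  rw [Finset.prod_attach (normalizedFactors I).toFinset (fun J => J)]
  rw [Finset.prod_eq_multiset_prod]
  simp only [Multiset.map_id', Multiset.toFinset_val]
  rw [Multiset.dedup_eq_self.2 hnd]
  exact associated_iff_eq.1 (prod_normalizedFactors hI0)

theorem aux_dvd_iff {J : Ideal R} (S : Finset (PP R)) :
    J ∣ (∏ 𝔭 ∈ S, 𝔭.1) ↔ ∃ T ∈ S.powerset, (∏ 𝔭 ∈ T, 𝔭.1) = J := by
  classical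
  constructor
  · intro hJ
    have hJ0 : J ≠ 0 := by
      rintro rfl
      exact aux_prod_ne_zero S (zero_dvd_iff.1 hJ)
    have hle : normalizedFactors J ≤ S.val.map Subtype.val := by
      rw [← aux_nf_prod]
      exact (dvd_iff_normalizedFactors_le_normalizedFactors hJ0 (aux_prod_ne_zero S)).1 hJ
    have hndJ : (normalizedFactors J).Nodup :=
      Multiset.nodup_of_le hle (S.nodup.map Subtype.val_injective)
    refine ⟨S.filter (fun 𝔭 => 𝔭.1 ∈ normalizedFactors J), Finset.mem_powerset.2
      (S.filter_subset _), ?_⟩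
    have hmap : (S.filter (fun 𝔭 => 𝔭.1 ∈ normalizedFactors J)).val.map Subtype.val
        = normalizedFactors J := by
      rw [Multiset.Nodup.ext (((S.filter _).nodup).map Subtype.val_injective) hndJ]
      intro a
      constructor
      · intro ha
        obtain ⟨𝔭, h𝔭, rfl⟩ := Multiset.mem_map.1 ha
        exact (Finset.mem_filter.1 (h𝔭)).2
      · intro ha
        have haS : a ∈ S.val.map Subtype.val := Multiset.mem_of_le hle ha
        obtain ⟨𝔭, h𝔭, rfl⟩ := Multiset.mem_map.1 haS
        exact Multiset.mem_map_of_mem Subtype.val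
          (Finset.mem_filter.2 ⟨h𝔭, ha⟩)
    rw [Finset.prod_eq_multiset_prod, hmap]
    exact associated_iff_eq.1 (prod_normalizedFactors hJ0)
  · rintro ⟨T, hT, rfl⟩
    exact Finset.prod_dvd_prod_of_subset _ _ _ (Finset.mem_powerset.1 hT)

end

variable {K : Type*} [Field K] [NumberField K]

theorem aux_two_le_norm (𝔭 : PP (𝓞 K)) : 2 ≤ Ideal.absNorm 𝔭.1 := by
  have h0 : Ideal.absNorm 𝔭.1 ≠ 0 := by
    simpa [Ideal.absNorm_eq_zero_iff] using 𝔭.2.2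
  have h1 : Ideal.absNorm 𝔭.1 ≠ 1 := by
    simpa [Ideal.absNorm_eq_one_iff] using 𝔭.2.1.ne_top
  omega

theorem aux_exists_ratprime (𝔭 : PP (𝓞 K)) :
    ∃ q : ℕ, q.Prime ∧ ((q : ℕ) : 𝓞 K) ∈ 𝔭.1 := by
  have key : ∀ N : ℕ, 2 ≤ N → ((N : ℕ) : 𝓞 K) ∈ 𝔭.1 →
      ∃ q : ℕ, q.Prime ∧ ((q : ℕ) : 𝓞 K) ∈ 𝔭.1 := by
    intro N
    induction N using Nat.strong_induction_on with
    | _ N ih =>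
      intro hN hmem
      set p := N.minFac with hp
      have hpp : p.Prime := Nat.minFac_prime (by omega)
      have hdvd : p ∣ N := Nat.minFac_dvd N
      have hfact : (N : 𝓞 K) = (p : 𝓞 K) * ((N / p : ℕ) : 𝓞 K) := by
        rw [← Nat.cast_mul, Nat.mul_div_cancel' hdvd]
      rw [hfact] at hmem
      rcases 𝔭.2.1.mem_or_mem hmem with h | h
      · exact ⟨p, hpp, h⟩
      · have hlt : N / p < N := Nat.div_lt_self (by omega) hpp.one_lt
        have h1le : 1 ≤ N / p := (Nat.one_le_div_iff hpp.pos).2 (Nat.minFac_le (by omega))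
        rcases eq_or_lt_of_le h1le with heq | hlt2
        · rw [← heq] at h
          simp only [Nat.cast_one] at h
          exact absurd (𝔭.1.eq_top_iff_one.2 h) 𝔭.2.1.ne_top
        · exact ih _ hlt hlt2 h
  exact key (Ideal.absNorm 𝔭.1) (aux_two_le_norm 𝔭) (by exact_mod_cast Ideal.absNorm_mem 𝔭.1)

noncomputable def ratPrime (𝔭 : PP (𝓞 K)) : Nat.Primes :=
  ⟨(aux_exists_ratprime 𝔭).choose, (aux_exists_ratprime 𝔭).choose_spec.1⟩

theorem aux_dvd_span (𝔭 : PP (𝓞 K)) :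
    𝔭.1 ∣ Ideal.span {((ratPrime 𝔭 : ℕ) : 𝓞 K)} := by
  rw [Ideal.dvd_iff_le, Ideal.span_singleton_le_iff_mem]
  exact (aux_exists_ratprime 𝔭).choose_spec.2

theorem aux_norm_span (q : ℕ) :
    Ideal.absNorm (Ideal.span {((q : ℕ) : 𝓞 K)}) =
      q ^ Fintype.card (Module.Free.ChooseBasisIndex ℤ (𝓞 K)) := by
  rw [Ideal.absNorm_span_singleton]
  have : ((q : ℕ) : 𝓞 K) = algebraMap ℤ (𝓞 K) (q : ℤ) := by push_cast; simp
  rw [this, Algebra.norm_algebraMap_of_basis (NumberField.RingOfIntegers.basis K)]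
  exact Int.natAbs_pow q _ ▸ by simp

theorem aux_q_le_norm {𝔭 : PP (𝓞 K)} {q : ℕ} (hq : q.Prime)
    (hdvd : 𝔭.1 ∣ Ideal.span {((q : ℕ) : 𝓞 K)}) : q ≤ Ideal.absNorm 𝔭.1 := by
  have hnd : Ideal.absNorm 𝔭.1 ∣ q ^ Fintype.card (Module.Free.ChooseBasisIndex ℤ (𝓞 K)) := by
    rw [← aux_norm_span q]
    exact map_dvd Ideal.absNorm hdvd
  obtain ⟨i, hi, he⟩ := (Nat.dvd_prime_pow hq).1 hnd
  rcases Nat.eq_zero_or_pos i with rfl | hipos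
  · rw [pow_zero] at he
    have := aux_two_le_norm 𝔭
    omega
  · rw [he]
    exact Nat.le_self_pow (by omega) q

theorem aux_fiber_card {q : ℕ} (hq : q.Prime) (S : Finset (PP (𝓞 K)))
    (hS : ∀ 𝔭 ∈ S, 𝔭.1 ∣ Ideal.span {((q : ℕ) : 𝓞 K)}) :
    S.card ≤ Fintype.card (Module.Free.ChooseBasisIndex ℤ (𝓞 K)) := by
  classical
  set n := Fintype.card (Module.Free.ChooseBasisIndex ℤ (𝓞 K))
  set T : Finset (Ideal (𝓞 K)) := S.image Subtype.val with hT
  have hcard : T.card = S.card := Finset.card_image_of_injective S Subtype.val_injective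
  have hprod : (∏ I ∈ T, I) ∣ Ideal.span {((q : ℕ) : 𝓞 K)} := by
    apply Finset.prod_primes_dvd
    · intro I hI
      obtain ⟨𝔭, h𝔭, rfl⟩ := Finset.mem_image.1 hI
      exact Ideal.prime_of_isPrime 𝔭.2.2 𝔭.2.1
    · intro I hI
      obtain ⟨𝔭, h𝔭, rfl⟩ := Finset.mem_image.1 hI
      exact hS 𝔭 h𝔭
  have hnormdvd : (∏ I ∈ T, Ideal.absNorm I) ∣ q ^ n := by
    rw [← map_prod, ← aux_norm_span q]
    exact map_dvd Ideal.absNorm hprod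
  have hle : (∏ I ∈ T, Ideal.absNorm I) ≤ q ^ n :=
    Nat.le_of_dvd (pow_pos hq.pos _) hnormdvd
  have hge : q ^ T.card ≤ ∏ I ∈ T, Ideal.absNorm I := by
    apply Finset.pow_card_le_prod
    intro I hI
    obtain ⟨𝔭, h𝔭, rfl⟩ := Finset.mem_image.1 hI
    exact aux_q_le_norm hq (hS 𝔭 h𝔭)
  rw [← hcard]
  exact (Nat.pow_le_pow_iff_right hq.one_lt).1 (le_trans hge hle)

theorem aux_summable_primes (r : ℝ) (hr : 1 < r) :
    Summable (fun 𝔭 : PP (𝓞 K) => (Ideal.absNorm 𝔭.1 : ℝ) ^ (-r)) := by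
  classical
  set n := Fintype.card (Module.Free.ChooseBasisIndex ℤ (𝓞 K))
  have hgs : Summable (fun p : Nat.Primes => (p : ℝ) ^ (-r)) :=
    Nat.Primes.summable_rpow.mpr (by linarith)
  have hg0 : ∀ p : Nat.Primes, (0:ℝ) ≤ (p : ℝ) ^ (-r) := fun p => Real.rpow_nonneg (by positivity) _
  apply summable_of_sum_le (c := n * ∑' p : Nat.Primes, (p : ℝ) ^ (-r))
    (fun 𝔭 => Real.rpow_nonneg (by positivity) _)
  intro S
  have step1 : ∀ 𝔭 ∈ S, (Ideal.absNorm 𝔭.1 : ℝ) ^ (-r) ≤ ((ratPrime 𝔭 : ℕ) : ℝ) ^ (-r) := by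
    intro 𝔭 _
    have h1 : ((ratPrime 𝔭 : ℕ) : ℝ) ≤ (Ideal.absNorm 𝔭.1 : ℝ) := by
      exact_mod_cast aux_q_le_norm (ratPrime 𝔭).2 (aux_dvd_span 𝔭)
    have h2 : (0:ℝ) < ((ratPrime 𝔭 : ℕ) : ℝ) := by
      have := (ratPrime 𝔭).2.pos
      exact_mod_cast this
    exact Real.rpow_le_rpow_of_nonpos h2 h1 (by linarith)
  set n := Fintype.card (Module.Free.ChooseBasisIndex ℤ (𝓞 K))
  calc ∑ 𝔭 ∈ S, (Ideal.absNorm 𝔭.1 : ℝ) ^ (-r)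
      ≤ ∑ 𝔭 ∈ S, ((ratPrime 𝔭 : ℕ) : ℝ) ^ (-r) := Finset.sum_le_sum step1
    _ = ∑ p ∈ S.image ratPrime, ∑ 𝔭 ∈ S.filter (fun 𝔭 => ratPrime 𝔭 = p),
          ((p : ℕ) : ℝ) ^ (-r) :=
        (Finset.sum_fiberwise_of_maps_to' (g := ratPrime) (t := S.image ratPrime)
          (fun 𝔭 h => Finset.mem_image_of_mem _ h) (fun p => ((p : ℕ) : ℝ) ^ (-r))).symm
    _ ≤ ∑ p ∈ S.image ratPrime, (n : ℝ) * ((p : ℕ) : ℝ) ^ (-r) := by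
        apply Finset.sum_le_sum
        intro p hp
        rw [Finset.sum_const, nsmul_eq_mul]
        apply mul_le_mul_of_nonneg_right _ (hg0 p)
        have hcard : (S.filter (fun 𝔭 => ratPrime 𝔭 = p)).card ≤ n := by
          apply aux_fiber_card p.2
          intro 𝔭 h𝔭
          have : ratPrime 𝔭 = p := (Finset.mem_filter.1 h𝔭).2
          rw [← this]
          exact aux_dvd_span 𝔭
        exact_mod_cast hcard
    _ = (n : ℝ) * ∑ p ∈ S.image ratPrime, ((p : ℕ) : ℝ) ^ (-r) := by
        rw [Finset.mul_sum]
    _ ≤ (n : ℝ) * ∑' p : Nat.Primes, (p : ℝ) ^ (-r) := by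
        apply mul_le_mul_of_nonneg_left _ (by positivity)
        exact Summable.sum_le_tsum _ (fun p _ => hg0 p) hgs

variable {K : Type*} [Field K] [NumberField K]

theorem aux_inner_sum (ψ : Ideal (𝓞 K) → ℂ) (hψ1 : ψ 1 = 1)
    (hψm : ∀ I J, ψ (I * J) = ψ I * ψ J) (S : Finset (PP (𝓞 K))) :
    (∑' 𝔟 : {J : Ideal (𝓞 K) // J ∣ ∏ 𝔭 ∈ S, 𝔭.1}, ψ 𝔟.1) = ∏ 𝔭 ∈ S, (1 + ψ 𝔭.1) := by
  classical
  let Ψ : Ideal (𝓞 K) →* ℂ := { toFun := ψ, map_one' := hψ1, map_mul' := hψm }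
  have hbij : Function.Bijective (fun T : {T // T ∈ S.powerset} =>
      (⟨∏ 𝔭 ∈ T.1, 𝔭.1, (aux_dvd_iff S).2 ⟨T.1, T.2, rfl⟩⟩ :
        {J : Ideal (𝓞 K) // J ∣ ∏ 𝔭 ∈ S, 𝔭.1})) := by
    constructor
    · intro T T' h
      exact Subtype.ext (aux_prod_inj (congrArg Subtype.val h))
    · rintro ⟨J, hJ⟩
      obtain ⟨T, hT, hTe⟩ := (aux_dvd_iff S).1 hJ
      exact ⟨⟨T, hT⟩, Subtype.ext hTe⟩
  rw [← Equiv.tsum_eq (Equiv.ofBijective _ hbij)]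
  have h1 : (∑' T : {T // T ∈ S.powerset}, ψ (∏ 𝔭 ∈ T.1, 𝔭.1))
      = ∑ T ∈ S.powerset, ψ (∏ 𝔭 ∈ T, 𝔭.1) :=
    Finset.tsum_subtype S.powerset (fun T => ψ (∏ 𝔭 ∈ T, 𝔭.1))
  calc ∑' T : {T // T ∈ S.powerset}, ψ (∏ 𝔭 ∈ T.1, 𝔭.1)
      = ∑ T ∈ S.powerset, ψ (∏ 𝔭 ∈ T, 𝔭.1) := h1
    _ = ∑ T ∈ S.powerset, ∏ 𝔭 ∈ T, ψ 𝔭.1 :=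
        Finset.sum_congr rfl fun T _ => map_prod Ψ _ T
    _ = ∏ 𝔭 ∈ S, (ψ 𝔭.1 + 1) := by
        rw [Finset.prod_add]
        simp
    _ = ∏ 𝔭 ∈ S, (1 + ψ 𝔭.1) := by
        exact Finset.prod_congr rfl fun 𝔭 _ => add_comm _ _

theorem aux_lhs_eq (ψ : Ideal (𝓞 K) → ℂ) (hψ1 : ψ 1 = 1)
    (hψm : ∀ I J, ψ (I * J) = ψ I * ψ J) (s : ℂ) :
    (∑' 𝔮 : {I : Ideal (𝓞 K) // Squarefree I},
        ψ 𝔮.1 * (Ideal.absNorm 𝔮.1 : ℂ) ^ (-s) * ∑' 𝔟 : {J : Ideal (𝓞 K) // J ∣ 𝔮.1}, ψ 𝔟.1) =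
    ∑' S : Finset (PP (𝓞 K)),
      ∏ 𝔭 ∈ S, (ψ 𝔭.1 * (1 + ψ 𝔭.1) * (Ideal.absNorm 𝔭.1 : ℂ) ^ (-s)) := by
  classical
  let Ψ : Ideal (𝓞 K) →* ℂ := { toFun := ψ, map_one' := hψ1, map_mul' := hψm }
  have hbij : Function.Bijective (fun S : Finset (PP (𝓞 K)) =>
      (⟨∏ 𝔭 ∈ S, 𝔭.1, aux_sqfree S⟩ : {I : Ideal (𝓞 K) // Squarefree I})) := by
    constructor
    · intro S T h
      exact aux_prod_inj (congrArg Subtype.val h)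
    · rintro ⟨I, hI⟩
      obtain ⟨S, hS⟩ := aux_surj hI
      exact ⟨S, Subtype.ext hS⟩
  rw [← Equiv.tsum_eq (Equiv.ofBijective _ hbij)]
  apply tsum_congr
  intro S
  show ψ (∏ 𝔭 ∈ S, 𝔭.1) * (Ideal.absNorm (∏ 𝔭 ∈ S, 𝔭.1) : ℂ) ^ (-s) *
      (∑' 𝔟 : {J : Ideal (𝓞 K) // J ∣ ∏ 𝔭 ∈ S, 𝔭.1}, ψ 𝔟.1) = _
  rw [aux_inner_sum ψ hψ1 hψm S]
  rw [show ψ (∏ 𝔭 ∈ S, 𝔭.1) = ∏ 𝔭 ∈ S, ψ 𝔭.1 from map_prod Ψ _ S]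
  rw [show Ideal.absNorm (∏ 𝔭 ∈ S, 𝔭.1) = ∏ 𝔭 ∈ S, Ideal.absNorm 𝔭.1 from
    map_prod Ideal.absNorm _ S]
  rw [aux_cast_prod_cpow S (fun 𝔭 => Ideal.absNorm 𝔭.1)
    (fun 𝔭 _ => lt_of_lt_of_le two_pos (aux_two_le_norm 𝔭)) (-s)]
  rw [← Finset.prod_mul_distrib, ← Finset.prod_mul_distrib]
  exact Finset.prod_congr rfl fun 𝔭 _ => by ring


end EulerAux

/-- Euler product identity for the squarefree-supported Dirichlet series
`Σ_{𝔮 squarefree} ψ(𝔮) N(𝔮)^{-s} Σ_{𝔟 ∣ 𝔮} ψ(𝔟)`: it equals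
`Π_𝔭 (1 + ψ(𝔭)(1+ψ(𝔭)) N(𝔭)^{-s}) = L(s,ψ) L(s,ψ²) F(s)` for `Re s > 1`, where
`F(s) = Π_𝔭 (1 - (ψ²(𝔭)+ψ³(𝔭)+ψ⁴(𝔭)) N(𝔭)^{-2s} + (ψ⁴(𝔭)+ψ⁵(𝔭)) N(𝔭)^{-3s})`
converges absolutely for `Re s > 1/2`. -/
theorem euler_product_squarefree_series (K : Type*) [Field K] [NumberField K]
    (ψ : Ideal (𝓞 K) → ℂ) (hψ1 : ψ 1 = 1) (hψm : ∀ I J, ψ (I * J) = ψ I * ψ J)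
    (hbd : ∀ 𝔭 : Ideal (𝓞 K), 𝔭.IsPrime → ‖ψ 𝔭‖ ≤ 1)
    (s : ℂ) (hs : 1 < s.re) :
    (∑' 𝔮 : {I : Ideal (𝓞 K) // Squarefree I},
        ψ 𝔮.1 * (Ideal.absNorm 𝔮.1 : ℂ) ^ (-s) * ∑' 𝔟 : {J : Ideal (𝓞 K) // J ∣ 𝔮.1}, ψ 𝔟.1) =
      (∏' 𝔭 : {I : Ideal (𝓞 K) // I.IsPrime ∧ I ≠ ⊥},
        (1 + ψ 𝔭.1 * (1 + ψ 𝔭.1) * (Ideal.absNorm 𝔭.1 : ℂ) ^ (-s))) ∧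
    (∑' 𝔮 : {I : Ideal (𝓞 K) // Squarefree I},
        ψ 𝔮.1 * (Ideal.absNorm 𝔮.1 : ℂ) ^ (-s) * ∑' 𝔟 : {J : Ideal (𝓞 K) // J ∣ 𝔮.1}, ψ 𝔟.1) =
      (∏' 𝔭 : {I : Ideal (𝓞 K) // I.IsPrime ∧ I ≠ ⊥},
          (1 - ψ 𝔭.1 * (Ideal.absNorm 𝔭.1 : ℂ) ^ (-s))⁻¹) *
      (∏' 𝔭 : {I : Ideal (𝓞 K) // I.IsPrime ∧ I ≠ ⊥},
          (1 - (ψ 𝔭.1) ^ 2 * (Ideal.absNorm 𝔭.1 : ℂ) ^ (-s))⁻¹) *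
      (∏' 𝔭 : {I : Ideal (𝓞 K) // I.IsPrime ∧ I ≠ ⊥},
          (1 - ((ψ 𝔭.1) ^ 2 + (ψ 𝔭.1) ^ 3 + (ψ 𝔭.1) ^ 4) * (Ideal.absNorm 𝔭.1 : ℂ) ^ (-(2 * s))
             + ((ψ 𝔭.1) ^ 4 + (ψ 𝔭.1) ^ 5) * (Ideal.absNorm 𝔭.1 : ℂ) ^ (-(3 * s)))) ∧
    (∀ s' : ℂ, 1 / 2 < s'.re →
      Multipliable (fun 𝔭 : {I : Ideal (𝓞 K) // I.IsPrime ∧ I ≠ ⊥} =>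
        (1 - ((ψ 𝔭.1) ^ 2 + (ψ 𝔭.1) ^ 3 + (ψ 𝔭.1) ^ 4) * (Ideal.absNorm 𝔭.1 : ℂ) ^ (-(2 * s'))
           + ((ψ 𝔭.1) ^ 4 + (ψ 𝔭.1) ^ 5) * (Ideal.absNorm 𝔭.1 : ℂ) ^ (-(3 * s'))))) := by
  classical
  have hbd' : ∀ 𝔭 : PP (𝓞 K), ‖ψ 𝔭.1‖ ≤ 1 := fun 𝔭 => hbd 𝔭.1 𝔭.2.1
  have hNpos : ∀ 𝔭 : PP (𝓞 K), 0 < Ideal.absNorm 𝔭.1 :=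
    fun 𝔭 => lt_of_lt_of_le two_pos (aux_two_le_norm 𝔭)
  have hnorm : ∀ (𝔭 : PP (𝓞 K)) (z : ℂ),
      ‖(Ideal.absNorm 𝔭.1 : ℂ) ^ z‖ = (Ideal.absNorm 𝔭.1 : ℝ) ^ z.re :=
    fun 𝔭 z => aux_norm_cpow _ (hNpos 𝔭) z
  have hN1 : ∀ 𝔭 : PP (𝓞 K), (1:ℝ) ≤ (Ideal.absNorm 𝔭.1 : ℝ) := by
    intro 𝔭; exact_mod_cast (hNpos 𝔭)
  have hψpow : ∀ (𝔭 : PP (𝓞 K)) (k : ℕ), ‖(ψ 𝔭.1) ^ k‖ ≤ 1 := by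
    intro 𝔭 k
    rw [norm_pow]
    exact pow_le_one₀ (norm_nonneg _) (hbd' 𝔭)
  have hsum0 : Summable (fun 𝔭 : PP (𝓞 K) => (Ideal.absNorm 𝔭.1 : ℝ) ^ (-s.re)) :=
    aux_summable_primes s.re hs
  have hhalf : ∀ 𝔭 : PP (𝓞 K), ((Ideal.absNorm 𝔭.1 : ℝ)) ^ (-s.re) ≤ 1/2 := by
    intro 𝔭
    calc ((Ideal.absNorm 𝔭.1 : ℝ)) ^ (-s.re) ≤ (2:ℝ) ^ (-s.re) :=
          Real.rpow_le_rpow_of_nonpos two_pos (by exact_mod_cast aux_two_le_norm 𝔭)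
            (by linarith)
      _ ≤ (2:ℝ) ^ (-(1:ℝ)) := Real.rpow_le_rpow_of_exponent_le one_le_two (by linarith)
      _ = 1/2 := by rw [Real.rpow_neg_one]; norm_num
  -- the main factor `a`
  set a : PP (𝓞 K) → ℂ :=
    fun 𝔭 => ψ 𝔭.1 * (1 + ψ 𝔭.1) * (Ideal.absNorm 𝔭.1 : ℂ) ^ (-s) with ha
  have hAnorm : ∀ 𝔭, ‖a 𝔭‖ ≤ 2 * (Ideal.absNorm 𝔭.1 : ℝ) ^ (-s.re) := by
    intro 𝔭
    rw [ha]
    simp only [norm_mul]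
    rw [hnorm 𝔭 (-s), Complex.neg_re]
    have h1 : ‖(1 : ℂ) + ψ 𝔭.1‖ ≤ 2 := by
      calc ‖(1 : ℂ) + ψ 𝔭.1‖ ≤ ‖(1:ℂ)‖ + ‖ψ 𝔭.1‖ := norm_add_le _ _
        _ ≤ 1 + 1 := by rw [norm_one]; linarith [hbd' 𝔭]
        _ = 2 := by norm_num
    have h0 : (0:ℝ) ≤ (Ideal.absNorm 𝔭.1 : ℝ) ^ (-s.re) := Real.rpow_nonneg (by positivity) _
    calc ‖ψ 𝔭.1‖ * ‖1 + ψ 𝔭.1‖ * ((Ideal.absNorm 𝔭.1 : ℝ) ^ (-s.re))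
        ≤ 1 * 2 * ((Ideal.absNorm 𝔭.1 : ℝ) ^ (-s.re)) := by
          apply mul_le_mul_of_nonneg_right _ h0
          exact mul_le_mul (hbd' 𝔭) h1 (norm_nonneg _) one_pos.le
      _ = 2 * ((Ideal.absNorm 𝔭.1 : ℝ) ^ (-s.re)) := by ring
  have hA : Summable (fun 𝔭 => ‖a 𝔭‖) :=
    Summable.of_nonneg_of_le (fun 𝔭 => norm_nonneg _) hAnorm (hsum0.mul_left 2)
  have hprodC : HasProd (fun 𝔭 => 1 + a 𝔭) (∑' S : Finset (PP (𝓞 K)), ∏ 𝔭 ∈ S, a 𝔭) :=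
    aux_hasProd_one_add hA
  have h1 : (∑' 𝔮 : {I : Ideal (𝓞 K) // Squarefree I},
        ψ 𝔮.1 * (Ideal.absNorm 𝔮.1 : ℂ) ^ (-s) * ∑' 𝔟 : {J : Ideal (𝓞 K) // J ∣ 𝔮.1}, ψ 𝔟.1) =
      ∏' 𝔭 : PP (𝓞 K), (1 + a 𝔭) :=
    (aux_lhs_eq ψ hψ1 hψm s).trans hprodC.tprod_eq.symm
  refine ⟨h1, ?_, ?_⟩
  · -- part 2
    set t : PP (𝓞 K) → ℂ := fun 𝔭 => (Ideal.absNorm 𝔭.1 : ℂ) ^ (-s) with ht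
    set f1 : PP (𝓞 K) → ℂ := fun 𝔭 => ψ 𝔭.1 * t 𝔭 with hf1
    set f2 : PP (𝓞 K) → ℂ := fun 𝔭 => (ψ 𝔭.1) ^ 2 * t 𝔭 with hf2
    have htn : ∀ 𝔭, ‖t 𝔭‖ = (Ideal.absNorm 𝔭.1 : ℝ) ^ (-s.re) := by
      intro 𝔭; rw [ht]; rw [hnorm 𝔭 (-s), Complex.neg_re]
    have hf1n : ∀ 𝔭, ‖f1 𝔭‖ ≤ (Ideal.absNorm 𝔭.1 : ℝ) ^ (-s.re) := by
      intro 𝔭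
      rw [hf1]; simp only [norm_mul]
      rw [htn 𝔭]
      have h0 : (0:ℝ) ≤ (Ideal.absNorm 𝔭.1 : ℝ) ^ (-s.re) := Real.rpow_nonneg (by positivity) _
      calc ‖ψ 𝔭.1‖ * ((Ideal.absNorm 𝔭.1 : ℝ) ^ (-s.re))
          ≤ 1 * ((Ideal.absNorm 𝔭.1 : ℝ) ^ (-s.re)) :=
            mul_le_mul_of_nonneg_right (hbd' 𝔭) h0
        _ = _ := one_mul _
    have hf2n : ∀ 𝔭, ‖f2 𝔭‖ ≤ (Ideal.absNorm 𝔭.1 : ℝ) ^ (-s.re) := by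
      intro 𝔭
      rw [hf2]; simp only [norm_mul]
      rw [htn 𝔭]
      have h0 : (0:ℝ) ≤ (Ideal.absNorm 𝔭.1 : ℝ) ^ (-s.re) := Real.rpow_nonneg (by positivity) _
      calc ‖(ψ 𝔭.1) ^ 2‖ * ((Ideal.absNorm 𝔭.1 : ℝ) ^ (-s.re))
          ≤ 1 * ((Ideal.absNorm 𝔭.1 : ℝ) ^ (-s.re)) :=
            mul_le_mul_of_nonneg_right (hψpow 𝔭 2) h0
        _ = _ := one_mul _
    have hf1half : ∀ 𝔭, ‖f1 𝔭‖ ≤ 1/2 := fun 𝔭 => le_trans (hf1n 𝔭) (hhalf 𝔭)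
    have hf2half : ∀ 𝔭, ‖f2 𝔭‖ ≤ 1/2 := fun 𝔭 => le_trans (hf2n 𝔭) (hhalf 𝔭)
    have hf1s : Summable (fun 𝔭 => ‖f1 𝔭‖) :=
      Summable.of_nonneg_of_le (fun 𝔭 => norm_nonneg _) hf1n hsum0
    have hf2s : Summable (fun 𝔭 => ‖f2 𝔭‖) :=
      Summable.of_nonneg_of_le (fun 𝔭 => norm_nonneg _) hf2n hsum0
    have hM1 : Multipliable (fun 𝔭 => 1 - f1 𝔭) := by
      have he : (fun 𝔭 : PP (𝓞 K) => 1 - f1 𝔭) = fun 𝔭 => 1 + (-(f1 𝔭)) := by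
        funext 𝔭; ring
      rw [he]
      exact (aux_hasProd_one_add (by simpa using hf1s)).multipliable
    have hM2 : Multipliable (fun 𝔭 => 1 - f2 𝔭) := by
      have he : (fun 𝔭 : PP (𝓞 K) => 1 - f2 𝔭) = fun 𝔭 => 1 + (-(f2 𝔭)) := by
        funext 𝔭; ring
      rw [he]
      exact (aux_hasProd_one_add (by simpa using hf2s)).multipliable
    have hMD1 : Multipliable (fun 𝔭 => (1 - f1 𝔭)⁻¹) := by
      have he : (fun 𝔭 : PP (𝓞 K) => (1 - f1 𝔭)⁻¹) = fun 𝔭 => 1 + ((1 - f1 𝔭)⁻¹ - 1) := by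
        funext 𝔭; ring
      rw [he]
      refine (aux_hasProd_one_add ?_).multipliable
      apply Summable.of_nonneg_of_le (fun 𝔭 => norm_nonneg _)
        (fun 𝔭 => aux_inv_bound (hf1half 𝔭)) (hf1s.mul_left 2)
    have hMD2 : Multipliable (fun 𝔭 => (1 - f2 𝔭)⁻¹) := by
      have he : (fun 𝔭 : PP (𝓞 K) => (1 - f2 𝔭)⁻¹) = fun 𝔭 => 1 + ((1 - f2 𝔭)⁻¹ - 1) := by
        funext 𝔭; ring
      rw [he]
      refine (aux_hasProd_one_add ?_).multipliable
      apply Summable.of_nonneg_of_le (fun 𝔭 => norm_nonneg _)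
        (fun 𝔭 => aux_inv_bound (hf2half 𝔭)) (hf2s.mul_left 2)
    have hMC : Multipliable (fun 𝔭 => 1 + a 𝔭) := hprodC.multipliable
    have hinv1 : (∏' 𝔭, (1 - f1 𝔭)⁻¹) * (∏' 𝔭, (1 - f1 𝔭)) = 1 := by
      rw [← Multipliable.tprod_mul hMD1 hM1]
      have he : ∀ 𝔭 : PP (𝓞 K), (1 - f1 𝔭)⁻¹ * (1 - f1 𝔭) = 1 :=
        fun 𝔭 => inv_mul_cancel₀ (aux_one_sub_ne_zero (hf1half 𝔭))
      rw [tprod_congr he, tprod_one]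
    have hinv2 : (∏' 𝔭, (1 - f2 𝔭)⁻¹) * (∏' 𝔭, (1 - f2 𝔭)) = 1 := by
      rw [← Multipliable.tprod_mul hMD2 hM2]
      have he : ∀ 𝔭 : PP (𝓞 K), (1 - f2 𝔭)⁻¹ * (1 - f2 𝔭) = 1 :=
        fun 𝔭 => inv_mul_cancel₀ (aux_one_sub_ne_zero (hf2half 𝔭))
      rw [tprod_congr he, tprod_one]
    have hFid : ∀ 𝔭 : PP (𝓞 K),
        (1 - ((ψ 𝔭.1) ^ 2 + (ψ 𝔭.1) ^ 3 + (ψ 𝔭.1) ^ 4) * (Ideal.absNorm 𝔭.1 : ℂ) ^ (-(2 * s))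
          + ((ψ 𝔭.1) ^ 4 + (ψ 𝔭.1) ^ 5) * (Ideal.absNorm 𝔭.1 : ℂ) ^ (-(3 * s)))
        = (1 - f1 𝔭) * ((1 - f2 𝔭) * (1 + a 𝔭)) := by
      intro 𝔭
      have hN0 : (Ideal.absNorm 𝔭.1 : ℂ) ≠ 0 := by
        exact_mod_cast (hNpos 𝔭).ne'
      have h2 : (Ideal.absNorm 𝔭.1 : ℂ) ^ (-(2 * s)) = t 𝔭 * t 𝔭 := by
        rw [show -(2 * s) = (-s) + (-s) by ring, Complex.cpow_add _ _ hN0]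
      have h3 : (Ideal.absNorm 𝔭.1 : ℂ) ^ (-(3 * s)) = t 𝔭 * (t 𝔭 * t 𝔭) := by
        rw [show -(3 * s) = (-s) + ((-s) + (-s)) by ring, Complex.cpow_add _ _ hN0,
          Complex.cpow_add _ _ hN0]
      rw [h2, h3, hf1, hf2, ha]
      ring
    have hprodF :
        (∏' 𝔭 : PP (𝓞 K),
          (1 - ((ψ 𝔭.1) ^ 2 + (ψ 𝔭.1) ^ 3 + (ψ 𝔭.1) ^ 4) * (Ideal.absNorm 𝔭.1 : ℂ) ^ (-(2 * s))
            + ((ψ 𝔭.1) ^ 4 + (ψ 𝔭.1) ^ 5) * (Ideal.absNorm 𝔭.1 : ℂ) ^ (-(3 * s))))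
        = (∏' 𝔭, (1 - f1 𝔭)) * ((∏' 𝔭, (1 - f2 𝔭)) * (∏' 𝔭, (1 + a 𝔭))) := by
      rw [tprod_congr hFid, Multipliable.tprod_mul hM1 (hM2.mul hMC), Multipliable.tprod_mul hM2 hMC]
    rw [h1, hprodF]
    have : (∏' 𝔭, (1 - f1 𝔭)⁻¹) * (∏' 𝔭, (1 - f2 𝔭)⁻¹) *
        ((∏' 𝔭, (1 - f1 𝔭)) * ((∏' 𝔭, (1 - f2 𝔭)) * (∏' 𝔭, (1 + a 𝔭))))
        = ((∏' 𝔭, (1 - f1 𝔭)⁻¹) * (∏' 𝔭, (1 - f1 𝔭))) *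
          (((∏' 𝔭, (1 - f2 𝔭)⁻¹) * (∏' 𝔭, (1 - f2 𝔭))) * (∏' 𝔭, (1 + a 𝔭))) := by
      ring
    rw [this, hinv1, hinv2, one_mul, one_mul]
  · -- part 3
    intro s' hs'
    set f3 : PP (𝓞 K) → ℂ := fun 𝔭 =>
      -(((ψ 𝔭.1) ^ 2 + (ψ 𝔭.1) ^ 3 + (ψ 𝔭.1) ^ 4) * (Ideal.absNorm 𝔭.1 : ℂ) ^ (-(2 * s')))
        + ((ψ 𝔭.1) ^ 4 + (ψ 𝔭.1) ^ 5) * (Ideal.absNorm 𝔭.1 : ℂ) ^ (-(3 * s')) with hf3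
    have hFeq : (fun 𝔭 : PP (𝓞 K) =>
        (1 - ((ψ 𝔭.1) ^ 2 + (ψ 𝔭.1) ^ 3 + (ψ 𝔭.1) ^ 4) * (Ideal.absNorm 𝔭.1 : ℂ) ^ (-(2 * s'))
          + ((ψ 𝔭.1) ^ 4 + (ψ 𝔭.1) ^ 5) * (Ideal.absNorm 𝔭.1 : ℂ) ^ (-(3 * s'))))
        = fun 𝔭 => 1 + f3 𝔭 := by
      funext 𝔭; rw [hf3]; ring
    have hb3 : ∀ 𝔭 : PP (𝓞 K), ‖f3 𝔭‖ ≤ 5 * (Ideal.absNorm 𝔭.1 : ℝ) ^ (-(2 * s'.re)) := by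
      intro 𝔭
      have hn2 : ‖(Ideal.absNorm 𝔭.1 : ℂ) ^ (-(2 * s'))‖
          = (Ideal.absNorm 𝔭.1 : ℝ) ^ (-(2 * s'.re)) := by
        rw [hnorm 𝔭 (-(2 * s'))]
        norm_num
      have hn3 : ‖(Ideal.absNorm 𝔭.1 : ℂ) ^ (-(3 * s'))‖
          ≤ (Ideal.absNorm 𝔭.1 : ℝ) ^ (-(2 * s'.re)) := by
        rw [hnorm 𝔭 (-(3 * s'))]
        have : ((-(3 * s')).re) = -(3 * s'.re) := by norm_num
        rw [this]
        exact Real.rpow_le_rpow_of_exponent_le (hN1 𝔭) (by linarith)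
      have hc1 : ‖(ψ 𝔭.1) ^ 2 + (ψ 𝔭.1) ^ 3 + (ψ 𝔭.1) ^ 4‖ ≤ 3 := by
        calc ‖(ψ 𝔭.1) ^ 2 + (ψ 𝔭.1) ^ 3 + (ψ 𝔭.1) ^ 4‖
            ≤ ‖(ψ 𝔭.1) ^ 2 + (ψ 𝔭.1) ^ 3‖ + ‖(ψ 𝔭.1) ^ 4‖ := norm_add_le _ _
          _ ≤ (‖(ψ 𝔭.1) ^ 2‖ + ‖(ψ 𝔭.1) ^ 3‖) + ‖(ψ 𝔭.1) ^ 4‖ := by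
              linarith [norm_add_le ((ψ 𝔭.1) ^ 2) ((ψ 𝔭.1) ^ 3)]
          _ ≤ 1 + 1 + 1 := by
              linarith [hψpow 𝔭 2, hψpow 𝔭 3, hψpow 𝔭 4]
          _ = 3 := by norm_num
      have hc2 : ‖(ψ 𝔭.1) ^ 4 + (ψ 𝔭.1) ^ 5‖ ≤ 2 := by
        calc ‖(ψ 𝔭.1) ^ 4 + (ψ 𝔭.1) ^ 5‖ ≤ ‖(ψ 𝔭.1) ^ 4‖ + ‖(ψ 𝔭.1) ^ 5‖ := norm_add_le _ _
          _ ≤ 1 + 1 := by linarith [hψpow 𝔭 4, hψpow 𝔭 5]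
          _ = 2 := by norm_num
      have h0 : (0:ℝ) ≤ (Ideal.absNorm 𝔭.1 : ℝ) ^ (-(2 * s'.re)) :=
        Real.rpow_nonneg (by positivity) _
      calc ‖f3 𝔭‖ ≤ ‖((ψ 𝔭.1) ^ 2 + (ψ 𝔭.1) ^ 3 + (ψ 𝔭.1) ^ 4) *
              (Ideal.absNorm 𝔭.1 : ℂ) ^ (-(2 * s'))‖
            + ‖((ψ 𝔭.1) ^ 4 + (ψ 𝔭.1) ^ 5) * (Ideal.absNorm 𝔭.1 : ℂ) ^ (-(3 * s'))‖ := by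
            rw [hf3]
            exact (norm_add_le _ _).trans (by rw [norm_neg])
        _ ≤ 3 * (Ideal.absNorm 𝔭.1 : ℝ) ^ (-(2 * s'.re))
            + 2 * (Ideal.absNorm 𝔭.1 : ℝ) ^ (-(2 * s'.re)) := by
            rw [norm_mul, norm_mul, hn2]
            have e1 := mul_le_mul hc1 le_rfl h0 (by norm_num : (0:ℝ) ≤ 3)
            have e2 := mul_le_mul hc2 hn3 (norm_nonneg _) (by norm_num : (0:ℝ) ≤ 2)
            linarith
        _ = 5 * (Ideal.absNorm 𝔭.1 : ℝ) ^ (-(2 * s'.re)) := by ring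
    have hs3 : Summable (fun 𝔭 : PP (𝓞 K) => ‖f3 𝔭‖) := by
      apply Summable.of_nonneg_of_le (fun 𝔭 => norm_nonneg _) hb3
      exact (aux_summable_primes (2 * s'.re) (by linarith)).mul_left 5
    rw [hFeq]
    exact (aux_hasProd_one_add hs3).multipliable
end
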